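/- arXiv:2110.05405 — 3 statements merged into one kernel-verified Lean document; each statement's English description precedes it below -/
import Mathlib

section
/- Suppose a finite simple graph G is word-representable and v is a vertex of G. Then there exists a semi-transitive orientation of G in which v is a sink, i.e., every edge incident with v is oriented towards v. -/
namespace WordRepr

variable {V : Type*}

/-- Two letters `x` and `y` alternate in a word `w` if in the subsequence of `w`
formed by all occurrences of `x` and `y`, no two consecutive letters are equal. -/
def Alternates [DecidableEq V] (w : List V) (x y : V) : Prop :=
  List.Chain' (· ≠ ·) (w.filter fun z => decide (z = x ∨ z = y))

/-- A word `w` represents the graph `G` if every vertex occurs in `w`, and two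
distinct vertices alternate in `w` iff they are adjacent in `G`. -/
def Represents [DecidableEq V] (G : SimpleGraph V) (w : List V) : Prop :=
  (∀ v : V, v ∈ w) ∧ ∀ x y : V, x ≠ y → (Alternates w x y ↔ G.Adj x y)

/-- A graph is word-representable if some word represents it. -/
def WordRepresentable [DecidableEq V] (G : SimpleGraph V) : Prop :=
  ∃ w : List V, Represents G w

/-- A word is uniform if every letter occurring in it occurs the same number of times. -/
def Uniform [DecidableEq V] (w : List V) : Prop :=
  ∀ x y : V, x ∈ w → y ∈ w → w.count x = w.count y

/-- `o` is an orientation of `G`: every oriented pair is an edge, and every edge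
gets exactly one of its two directions. -/
def IsOrientationOf (G : SimpleGraph V) (o : V → V → Prop) : Prop :=
  (∀ x y : V, o x y → G.Adj x y) ∧ ∀ x y : V, G.Adj x y → (o x y ↔ ¬ o y x)

/-- A relation is acyclic if it has no directed cycle. -/
def Acyclic (o : V → V → Prop) : Prop :=
  ∀ v : V, ¬ Relation.TransGen o v v

/-- An orientation of `G` is semi-transitive if it is acyclic and for every
directed path `p 0 → p 1 → ⋯ → p k` whose endpoints are adjacent in `G`,
all the edges `p i → p j` (`i < j`) are present and oriented forwards. -/
def SemiTransitive (G : SimpleGraph V) (o : V → V → Prop) : Prop :=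
  IsOrientationOf G o ∧ Acyclic o ∧
    ∀ (k : ℕ) (p : Fin (k + 1) → V),
      (∀ i : Fin k, o (p i.castSucc) (p i.succ)) →
      G.Adj (p 0) (p (Fin.last k)) →
      ∀ i j : Fin (k + 1), i < j → o (p i) (p j)


set_option linter.unusedSectionVars false

section FlipMachinery

lemma acyclic_of_rank (o : V → V → Prop) (h : V → ℕ)
    (hh : ∀ x y, o x y → h x < h y) : Acyclic o := by
  have key : ∀ a b, Relation.TransGen o a b → h a < h b := by
    intro a b hab
    induction hab with
    | single hs => exact hh _ _ hs
    | tail _ hs ih => exact ih.trans (hh _ _ hs)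
  intro t ht
  exact lt_irrefl _ (key t t ht)

lemma exists_rank [Fintype V] (o : V → V → Prop) (hac : Acyclic o) :
    ∃ h : V → ℕ, ∀ x y, o x y → h x < h y := by
  refine ⟨fun v => {u | Relation.TransGen o u v}.ncard, ?_⟩
  intro x y hxy
  apply Set.ncard_lt_ncard _ (Set.toFinite _)
  constructor
  · intro u hu
    exact Relation.TransGen.tail hu hxy
  · intro hsub
    have hx : x ∈ {u | Relation.TransGen o u y} := Relation.TransGen.single hxy
    exact hac x (hsub hx)

def flip (o : V → V → Prop) (s : V) : V → V → Prop :=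
  fun x y => (y = s ∧ o s x) ∨ (x ≠ s ∧ y ≠ s ∧ o x y)

theorem semiTransitive_flip [Fintype V] (G : SimpleGraph V) (o : V → V → Prop)
    (hst : SemiTransitive G o) (s : V) (hs : ∀ x, ¬ o x s) :
    SemiTransitive G (flip o s) := by
  obtain ⟨⟨hedge, htot⟩, hac, hsh⟩ := hst
  have hnss : ¬ o s s := hs s
  have hos : ∀ x, G.Adj s x → o s x := by
    intro x h
    have h2 := htot x s h.symm
    have h3 := hs x
    tauto
  classical
  refine ⟨⟨?_, ?_⟩, ?_, ?_⟩
  · rintro x y (⟨rfl, h⟩ | ⟨-, -, h⟩)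
    · exact (hedge _ _ h).symm
    · exact hedge _ _ h
  · intro x y hadj
    by_cases hx : x = s
    · rw [hx] at hadj ⊢
      have hy : y ≠ s := hadj.ne'
      constructor
      · rintro (⟨rfl, -⟩ | ⟨hne, -, -⟩)
        · exact absurd rfl hy
        · exact absurd rfl hne
      · intro hn
        exact absurd (Or.inl ⟨rfl, hos y hadj⟩) hn
    · by_cases hy : y = s
      · rw [hy] at hadj ⊢
        constructor
        · intro _
          rintro (⟨rfl, -⟩ | ⟨hss, -, -⟩)
          · exact hx rfl
          · exact hss rfl
        · intro _
          exact Or.inl ⟨rfl, hos x hadj.symm⟩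
      · have h2 := htot x y hadj
        simp only [flip, hx, hy]
        tauto
  · obtain ⟨h, hh⟩ := exists_rank o hac
    have hbN : ∀ x, h x < (Finset.univ.sup h) + 1 :=
      fun x => Nat.lt_succ_of_le (Finset.le_sup (Finset.mem_univ x))
    apply acyclic_of_rank _ (fun x => if x = s then (Finset.univ.sup h) + 1 else h x)
    rintro x y (⟨hy, hsx⟩ | ⟨hx, hy, hxy⟩)
    · have hxs : x ≠ s := fun he => hnss (he ▸ hsx)
      simp only [hy, hxs, if_false, if_pos rfl]
      exact hbN x
    · simp only [if_neg hx, if_neg hy]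
      exact hh _ _ hxy
  · intro k p hstep hadj i j hij
    have hout : ∀ x y, flip o s x y → x ≠ s := by
      rintro x y (⟨rfl, hsx⟩ | ⟨hx, -, -⟩)
      · exact fun he => hnss (he ▸ hsx)
      · exact hx
    by_cases hsp : ∀ a : Fin (k+1), p a ≠ s
    · have hstep' : ∀ i : Fin k, o (p i.castSucc) (p i.succ) := by
        intro i
        rcases hstep i with ⟨he, -⟩ | ⟨-, -, h⟩
        · exact absurd he (hsp _)
        · exact h
      exact Or.inr ⟨hsp _, hsp _, hsh k p hstep' hadj i j hij⟩
    · push_neg at hsp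
      obtain ⟨a, ha⟩ := hsp
      have hcs : ∀ i : Fin k, p i.castSucc ≠ s := fun i => hout _ _ (hstep i)
      have halast : a = Fin.last k := by
        by_contra hne
        obtain ⟨i', hi'⟩ := Fin.exists_castSucc_eq.mpr hne
        exact hcs i' (by rw [hi']; exact ha)
      subst halast
      cases k with
      | zero =>
        have h1 := i.isLt
        have h2 := j.isLt
        rw [Fin.lt_def] at hij
        omega
      | succ k' =>
        set q : Fin (k' + 1 + 1) → V := Fin.cases s (fun m : Fin (k'+1) => p m.castSucc) with hq
        have hq0 : q 0 = s := rfl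
        have hqs : ∀ m : Fin (k'+1), q m.succ = p m.castSucc := fun m => by simp [hq]
        have hqstep : ∀ m : Fin (k'+1), o (q m.castSucc) (q m.succ) := by
          intro m
          induction m using Fin.cases with
          | zero =>
            have e1 : ((0 : Fin (k'+1)).castSucc) = (0 : Fin (k'+2)) := rfl
            rw [e1, hq0, hqs 0]
            have hadj' : G.Adj s (p (0 : Fin (k'+2))) := by
              rw [← ha]; exact hadj.symm
            have h2 := hos _ hadj'
            have e2 : ((0 : Fin (k'+1)).castSucc) = (0 : Fin (k'+2)) := rfl
            rw [e2]
            exact h2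
          | succ m' =>
            have e1 : (m'.succ).castSucc = (m'.castSucc).succ := (Fin.succ_castSucc m').symm
            rw [e1, hqs, hqs]
            rcases hstep (m'.castSucc) with ⟨he, -⟩ | ⟨-, -, hoo⟩
            · exfalso
              apply hcs (m'.succ)
              rw [← Fin.succ_castSucc]
              exact he
            · rw [Fin.succ_castSucc] at hoo
              exact hoo
        have hqadj : G.Adj (q 0) (q (Fin.last (k'+1))) := by
          rw [hq0]
          have e1 : Fin.last (k'+1) = (Fin.last k').succ := (Fin.succ_last k').symm
          rw [e1, hqs]
          rcases hstep (Fin.last k') with ⟨-, hsx⟩ | ⟨-, hne, -⟩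
          · exact hedge _ _ hsx
          · exfalso
            apply hne
            rw [Fin.succ_last]
            exact ha
        have hq_all := hsh (k'+1) q hqstep hqadj
        by_cases hj : j = Fin.last (k'+1)
        · subst hj
          left
          refine ⟨ha, ?_⟩
          obtain ⟨i', hi'⟩ := Fin.exists_castSucc_eq.mpr (ne_of_lt hij)
          rw [← hi']
          have h2 := hq_all 0 i'.succ (Fin.succ_pos i')
          rw [hq0, hqs] at h2
          exact h2
        · obtain ⟨j', hj'⟩ := Fin.exists_castSucc_eq.mpr hj
          have hi_ne : i ≠ Fin.last (k'+1) := ne_of_lt (lt_of_lt_of_le hij (Fin.le_last j))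
          obtain ⟨i', hi'⟩ := Fin.exists_castSucc_eq.mpr hi_ne
          refine Or.inr ⟨by rw [← hi']; exact hcs i', by rw [← hj']; exact hcs j', ?_⟩
          have hij' : i'.succ < j'.succ := by
            rw [Fin.succ_lt_succ_iff]
            rw [← Fin.castSucc_lt_castSucc_iff]
            rw [hi', hj']
            exact hij
          have h2 := hq_all i'.succ j'.succ hij'
          rw [hqs, hqs] at h2
          rw [← hi', ← hj']
          exact h2
lemma sink_of_source [Fintype V] (G : SimpleGraph V) (o : V → V → Prop)
    (hst : SemiTransitive G o) (v : V) (hsrc : ∀ x, ¬ o x v) :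
    ∃ o' : V → V → Prop, SemiTransitive G o' ∧ ∀ u : V, G.Adj v u → o' u v := by
  refine ⟨flip o v, semiTransitive_flip G o hst v hsrc, ?_⟩
  intro u hadj
  have h2 := hst.1.2 u v hadj.symm
  have h3 := hsrc u
  exact Or.inl ⟨rfl, by tauto⟩

lemma make_sink_aux [Fintype V] (G : SimpleGraph V) :
    ∀ (n : ℕ) (o : V → V → Prop), SemiTransitive G o → ∀ v : V,
      {u | Relation.TransGen o u v}.ncard ≤ n →
      ∃ o' : V → V → Prop, SemiTransitive G o' ∧ ∀ u : V, G.Adj v u → o' u v := by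
  intro n
  induction n with
  | zero =>
    intro o hst v hcard
    have hempty : ∀ u, ¬ Relation.TransGen o u v := by
      intro u hu
      have h0 : {u | Relation.TransGen o u v}.ncard = 0 := le_antisymm hcard (Nat.zero_le _)
      rw [Set.ncard_eq_zero (Set.toFinite _)] at h0
      have : u ∈ {u | Relation.TransGen o u v} := hu
      rw [h0] at this
      exact this
    exact sink_of_source G o hst v (fun x hx => hempty x (Relation.TransGen.single hx))
  | succ n ih =>
    intro o hst v hcard
    by_cases hv : ∀ u, ¬ Relation.TransGen o u v
    · exact sink_of_source G o hst v (fun x hx => hv x (Relation.TransGen.single hx))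
    · push_neg at hv
      obtain ⟨u₀, hu₀⟩ := hv
      obtain ⟨h, hh⟩ := exists_rank o hst.2.1
      have hkey : ∀ a b, Relation.TransGen o a b → h a < h b := by
        intro a b hab
        induction hab with
        | single hs => exact hh _ _ hs
        | tail _ hs ih2 => exact ih2.trans (hh _ _ hs)
      have wf : WellFounded (Relation.TransGen o) := by
        apply Subrelation.wf (r := InvImage (· < ·) h)
        · intro x y hxy; exact hkey x y hxy
        · exact InvImage.wf h (Nat.lt_wfRel.wf)
      obtain ⟨s, hs_mem, hs_min⟩ := wf.has_min {u | Relation.TransGen o u v} ⟨u₀, hu₀⟩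
      have hs_src : ∀ x, ¬ o x s := by
        intro x hx
        exact hs_min x ((Relation.TransGen.single hx).trans hs_mem) (Relation.TransGen.single hx)
      have hsv : s ≠ v := by
        intro he
        exact hst.2.1 v (he ▸ hs_mem)
      have hst₁ := semiTransitive_flip G o hst s hs_src
      have key : ∀ a b, Relation.TransGen (flip o s) a b → b ≠ s →
          Relation.TransGen o a b ∧ a ≠ s := by
        intro a b hab
        induction hab with
        | single h1 =>
          intro hb
          rcases h1 with ⟨he, -⟩ | ⟨ha, -, h1⟩
          · exact absurd he hb
          · exact ⟨Relation.TransGen.single h1, ha⟩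
        | tail hac2 hcb ih2 =>
          intro hb
          rcases hcb with ⟨he, -⟩ | ⟨hc, -, h1⟩
          · exact absurd he hb
          · obtain ⟨h2, h3⟩ := ih2 hc
            exact ⟨h2.tail h1, h3⟩
      have hss : {u | Relation.TransGen (flip o s) u v} ⊆
          {u | Relation.TransGen o u v} \ {s} := by
        intro u hu
        obtain ⟨h1, h2⟩ := key u v hu hsv.symm
        exact ⟨h1, h2⟩
      have hlt : {u | Relation.TransGen (flip o s) u v}.ncard ≤ n := by
        have h1 : {u | Relation.TransGen (flip o s) u v}.ncard ≤
            ({u | Relation.TransGen o u v} \ {s}).ncard :=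
          Set.ncard_le_ncard hss (Set.toFinite _)
        have h2 : ({u | Relation.TransGen o u v} \ {s}).ncard <
            {u | Relation.TransGen o u v}.ncard :=
          Set.ncard_diff_singleton_lt_of_mem hs_mem (Set.toFinite _)
        omega
      exact ih (flip o s) hst₁ v hlt

theorem make_sink [Fintype V] (G : SimpleGraph V) (o : V → V → Prop)
    (hst : SemiTransitive G o) (v : V) :
    ∃ o' : V → V → Prop, SemiTransitive G o' ∧ ∀ u : V, G.Adj v u → o' u v :=
  make_sink_aux G {u | Relation.TransGen o u v}.ncard o hst v le_rfl

end FlipMachinery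

section WordMachinery

variable [DecidableEq V]


def bal (w : List V) (x y : V) : Prop :=
  ∀ n : ℕ, (w.take n).count y ≤ (w.take n).count x ∧
    (w.take n).count x ≤ (w.take n).count y + 1

def alt : V → V → List V → Prop
  | _, _, [] => True
  | x, y, a :: t => a = x ∧ alt y x t

lemma chain'_of_alt : ∀ (P : List V) (x y : V), x ≠ y → alt x y P → P.Chain' (· ≠ ·) := by
  intro P
  induction P with
  | nil => intro x y _ _; exact List.isChain_nil
  | cons a t ih =>
    intro x y hxy ha
    obtain ⟨rfl, ht⟩ := ha
    rw [List.Chain', List.isChain_cons]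
    refine ⟨?_, ih y a hxy.symm ht⟩
    intro b hb
    cases t with
    | nil => simp at hb
    | cons c t' =>
      obtain ⟨rfl, _⟩ := ht
      simp at hb
      subst hb
      exact hxy

lemma alt_or_of_chain' : ∀ (P : List V) (x y : V), x ≠ y → (∀ z ∈ P, z = x ∨ z = y) →
    P.Chain' (· ≠ ·) → alt x y P ∨ alt y x P := by
  intro P
  induction P with
  | nil => intro x y _ _ _; left; trivial
  | cons a t ih =>
    intro x y hxy hmem hch
    rw [List.Chain', List.isChain_cons] at hch
    have hmt : ∀ z ∈ t, z = x ∨ z = y := fun z hz => hmem z (List.mem_cons_of_mem _ hz)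
    have hmt' : ∀ z ∈ t, z = y ∨ z = x := fun z hz => (hmt z hz).symm
    rcases hmem a (List.mem_cons_self) with rfl | rfl
    · left
      refine ⟨rfl, ?_⟩
      cases t with
      | nil => trivial
      | cons c t' =>
        have hca : a ≠ c := hch.1 c rfl
        rcases hmt c (List.mem_cons_self) with rfl | rfl
        · exact absurd rfl hca
        · rcases ih a c hxy hmt hch.2 with h | h
          · obtain ⟨rfl, _⟩ := h; exact absurd rfl hca
          · exact h
    · right
      refine ⟨rfl, ?_⟩
      cases t with
      | nil => trivial
      | cons c t' =>
        have hca : a ≠ c := hch.1 c rfl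
        rcases hmt c (List.mem_cons_self) with rfl | rfl
        · rcases ih c a hxy hmt hch.2 with h | h
          · exact h
          · obtain ⟨rfl, _⟩ := h; exact absurd rfl hca
        · exact absurd rfl hca

lemma alt_iff_count : ∀ (P : List V) (x y : V), x ≠ y → (∀ z ∈ P, z = x ∨ z = y) →
    (alt x y P ↔ ∀ n : ℕ, (P.take n).count y ≤ (P.take n).count x ∧
      (P.take n).count x ≤ (P.take n).count y + 1) := by
  intro P
  induction P with
  | nil => intro x y _ _; simp [alt]
  | cons a t ih =>
    intro x y hxy hmem
    have hmt : ∀ z ∈ t, z = x ∨ z = y := fun z hz => hmem z (List.mem_cons_of_mem _ hz)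
    have hmt' : ∀ z ∈ t, z = y ∨ z = x := fun z hz => (hmt z hz).symm
    rcases hmem a (List.mem_cons_self) with rfl | rfl
    · -- a = x, here hxy : a ≠ y
      have h1 : alt a y (a :: t) ↔ alt y a t := by simp [alt]
      rw [h1, ih y a (fun h => hxy h.symm) hmt']
      constructor
      · intro h n
        cases n with
        | zero => simp
        | succ n =>
          have h2 := h n
          simp only [List.take_succ_cons, List.count_cons, beq_self_eq_true, if_true]
          have e1 : (a == y) = false := by simp [hxy]
          simp only [e1, Bool.false_eq_true, if_false]
          omega
      · intro h n
        have h2 := h (n + 1)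
        simp only [List.take_succ_cons, List.count_cons, beq_self_eq_true, if_true] at h2
        have e1 : (a == y) = false := by simp [hxy]
        simp only [e1, Bool.false_eq_true, if_false] at h2
        omega
    · -- a = y, hxy : x ≠ a
      constructor
      · intro h; exact absurd h.1 hxy.symm
      · intro h
        exfalso
        have h2 := h 1
        have e1 : (a == x) = false := by simp; exact fun he => hxy he.symm
        simp only [List.take_succ_cons, List.take_zero, List.count_cons, List.count_nil,
          beq_self_eq_true, if_true, e1, Bool.false_eq_true, if_false] at h2
        omega


lemma filter_take_eq (p : V → Bool) : ∀ (w : List V) (n : ℕ),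
    ∃ m, (w.take n).filter p = (w.filter p).take m := by
  intro w
  induction w with
  | nil => intro n; exact ⟨0, by simp⟩
  | cons a t ih =>
    intro n
    cases n with
    | zero => exact ⟨0, by simp⟩
    | succ n =>
      obtain ⟨m, hm⟩ := ih n
      by_cases h : p a
      · exact ⟨m + 1, by simp [h, hm]⟩
      · exact ⟨m, by simp [h, hm]⟩

lemma take_filter_eq (p : V → Bool) : ∀ (w : List V) (m : ℕ),
    ∃ n, (w.take n).filter p = (w.filter p).take m := by
  intro w
  induction w with
  | nil => intro m; exact ⟨0, by simp⟩
  | cons a t ih =>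
    intro m
    by_cases h : p a
    · cases m with
      | zero => exact ⟨0, by simp⟩
      | succ m =>
        obtain ⟨n, hn⟩ := ih m
        exact ⟨n + 1, by simp [h, hn]⟩
    · obtain ⟨n, hn⟩ := ih m
      exact ⟨n + 1, by simp [h, hn]⟩

lemma mem_pair {w : List V} {x y z : V}
    (hz : z ∈ w.filter fun u => decide (u = x ∨ u = y)) : z = x ∨ z = y := by
  rw [List.mem_filter] at hz
  exact of_decide_eq_true hz.2

lemma indexOf_lt_of_mem_take : ∀ (w : List V) (n : ℕ) (x : V), x ∈ w.take n → w.idxOf x < n := by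
  intro w
  induction w with
  | nil => intro n x hx; simp at hx
  | cons a t ih =>
    intro n x hx
    cases n with
    | zero => simp at hx
    | succ n =>
      simp only [List.take_succ_cons, List.mem_cons] at hx
      by_cases hxa : x = a
      · subst hxa; simp [List.idxOf_cons_self]
      · have hx' : x ∈ t.take n := by tauto
        have := ih n x hx'
        rw [List.idxOf_cons_ne _ (fun he => hxa he.symm)]
        omega
lemma bal_iff_alt (w : List V) (x y : V) (hxy : x ≠ y) :
    bal w x y ↔ alt x y (w.filter fun z => decide (z = x ∨ z = y)) := by
  set p : V → Bool := fun z => decide (z = x ∨ z = y) with hp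
  have hpx : p x = true := by simp [hp]
  have hpy : p y = true := by simp [hp]
  have hmem : ∀ z ∈ w.filter p, z = x ∨ z = y := fun z hz => mem_pair hz
  rw [alt_iff_count _ x y hxy hmem]
  constructor
  · intro h m
    obtain ⟨n, hn⟩ := take_filter_eq p w m
    rw [← hn, List.count_filter hpy, List.count_filter hpx]
    exact h n
  · intro h n
    obtain ⟨m, hm⟩ := filter_take_eq p w n
    have h2 := h m
    rw [← hm, List.count_filter hpy, List.count_filter hpx] at h2
    exact h2

lemma alternates_iff_bal (w : List V) (x y : V) (hxy : x ≠ y) :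
    Alternates w x y ↔ bal w x y ∨ bal w y x := by
  set p : V → Bool := fun z => decide (z = x ∨ z = y) with hp
  have hpq : w.filter (fun z => decide (z = y ∨ z = x)) = w.filter p := by
    apply List.filter_congr
    intro z _
    simp [hp, or_comm]
  rw [Alternates, bal_iff_alt w x y hxy, bal_iff_alt w y x hxy.symm, hpq]
  have hmem : ∀ z ∈ w.filter p, z = x ∨ z = y := fun z hz => mem_pair hz
  constructor
  · exact alt_or_of_chain' _ x y hxy hmem
  · rintro (h | h)
    · exact chain'_of_alt _ x y hxy h
    · exact chain'_of_alt _ y x hxy.symm h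

lemma bal_indexOf_le (w : List V) (x y : V) (hy : y ∈ w) (h : bal w x y) :
    w.idxOf x ≤ w.idxOf y := by
  have hylt : w.idxOf y < w.length := List.idxOf_lt_length_iff.mpr hy
  have hymem : y ∈ w.take (w.idxOf y + 1) := by
    rw [List.take_succ]
    have : w[w.idxOf y]? = some y := by
      rw [List.getElem?_eq_getElem hylt, List.getElem_idxOf]
    rw [this]
    simp
  have hcy : 0 < (w.take (w.idxOf y + 1)).count y := List.count_pos_iff.mpr hymem
  have hcx : 0 < (w.take (w.idxOf y + 1)).count x := lt_of_lt_of_le hcy (h _).1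
  have hxmem : x ∈ w.take (w.idxOf y + 1) := List.count_pos_iff.mp hcx
  have := indexOf_lt_of_mem_take w _ x hxmem
  omega

/-- descending chain helper on `Fin (k+1)` -/
lemma fin_chain_le {k : ℕ} (g : Fin (k + 1) → ℕ)
    (hstep : ∀ i : Fin k, g i.succ ≤ g i.castSucc) :
    ∀ a b : Fin (k + 1), a ≤ b → g b ≤ g a := by
  intro a b
  induction b using Fin.induction with
  | zero => intro h; have : a = 0 := le_antisymm h (Fin.zero_le a); rw [this]
  | succ i ih =>
    intro h
    rcases eq_or_lt_of_le h with rfl | hlt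
    · exact le_rfl
    · have hle : a ≤ i.castSucc := Fin.le_castSucc_iff.mpr hlt
      exact (hstep i).trans (ih hle)


theorem semiTransitive_of_represents (G : SimpleGraph V) (w : List V) (hw : Represents G w) :
    SemiTransitive G (fun x y => G.Adj x y ∧ w.idxOf x < w.idxOf y) := by
  obtain ⟨hall, hiff⟩ := hw
  refine ⟨⟨fun x y h => h.1, ?_⟩, ?_, ?_⟩
  · intro x y hadj
    constructor
    · rintro ⟨_, hlt⟩ ⟨_, hlt'⟩; omega
    · intro hn
      refine ⟨hadj, ?_⟩
      have hne : w.idxOf x ≠ w.idxOf y := by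
        intro he
        exact hadj.ne ((List.idxOf_inj (hall x)).mp he)
      have : ¬ w.idxOf y < w.idxOf x := fun hlt => hn ⟨hadj.symm, hlt⟩
      omega
  · exact acyclic_of_rank _ (fun x => w.idxOf x) (fun x y h => h.2)
  · intro k p hstep hadj i j hij
    have hmono : StrictMono fun i : Fin (k+1) => w.idxOf (p i) :=
      Fin.strictMono_iff_lt_succ.mpr fun i => (hstep i).2
    have hbal_step : ∀ i : Fin k, bal w (p i.castSucc) (p i.succ) := by
      intro i
      obtain ⟨hadj', hlt⟩ := hstep i
      have hne := hadj'.ne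
      rcases (alternates_iff_bal w _ _ hne).mp ((hiff _ _ hne).mpr hadj') with hb | hb
      · exact hb
      · exfalso
        have := bal_indexOf_le w _ _ (hall _) hb
        omega
    have h0last : (0 : Fin (k+1)) < Fin.last k :=
      lt_of_le_of_lt (Fin.zero_le i) (lt_of_lt_of_le hij (Fin.le_last j))
    have hbal0k : bal w (p 0) (p (Fin.last k)) := by
      have hne : p 0 ≠ p (Fin.last k) := hadj.ne
      rcases (alternates_iff_bal w _ _ hne).mp ((hiff _ _ hne).mpr hadj) with hb | hb
      · exact hb
      · exfalso
        have h1 := bal_indexOf_le w _ _ (hall _) hb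
        have h2 : w.idxOf (p 0) < w.idxOf (p (Fin.last k)) := hmono h0last
        omega
    have hle : ∀ (n : ℕ) (a b : Fin (k+1)), a ≤ b →
        (w.take n).count (p b) ≤ (w.take n).count (p a) := by
      intro n
      exact fin_chain_le (fun i => (w.take n).count (p i)) (fun i => (hbal_step i n).1)
    have hbalij : bal w (p i) (p j) := by
      intro n
      refine ⟨hle n i j (le_of_lt hij), ?_⟩
      have h1 : (w.take n).count (p i) ≤ (w.take n).count (p 0) := hle n 0 i (Fin.zero_le i)
      have h2 := (hbal0k n).2
      have h3 : (w.take n).count (p (Fin.last k)) ≤ (w.take n).count (p j) :=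
        hle n j (Fin.last k) (Fin.le_last j)
      omega
    have hltij : w.idxOf (p i) < w.idxOf (p j) := hmono hij
    have hneij : p i ≠ p j := fun he => by rw [he] at hltij; exact lt_irrefl _ hltij
    exact ⟨(hiff _ _ hneij).mp ((alternates_iff_bal w _ _ hneij).mpr (Or.inl hbalij)), hltij⟩

end WordMachinery

/-- Every word-representable graph has a semi-transitive orientation in which any
prescribed vertex `v` is a sink. -/
theorem exists_semiTransitive_sink [Fintype V] [DecidableEq V] (G : SimpleGraph V)
    (h : WordRepresentable G) (v : V) :
    ∃ o : V → V → Prop, SemiTransitive G o ∧ ∀ u : V, G.Adj v u → o u v := by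
  obtain ⟨w, hw⟩ := h
  exact make_sink G _ (semiTransitive_of_represents G w hw) v

end WordRepr
end

section
/- If a finite simple graph G is word-representable, then for every vertex v of G the subgraph of G induced by the neighbourhood of v is a comparability graph. -/
namespace WordRepr

variable {V : Type*}

/-- A graph is a comparability graph if adjacency of distinct vertices coincides with
comparability in some strict partial order. -/
def IsComparabilityGraph {W : Type*} (H : SimpleGraph W) : Prop :=
  ∃ lt : W → W → Prop, (∀ a, ¬ lt a a) ∧ (∀ a b c, lt a b → lt b c → lt a c) ∧
    ∀ a b : W, a ≠ b → (H.Adj a b ↔ lt a b ∨ lt b a)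

section Aux
variable [DecidableEq V]
set_option linter.unusedSectionVars false
set_option linter.unusedVariables false

/-- The subword of `l` on the letters `a`, `b`. -/
def mf (a b : V) (l : List V) : List V := l.filter fun c => decide (c = a ∨ c = b)

lemma alt_def {w : List V} {a b : V} : Alternates w a b ↔ List.Chain' (· ≠ ·) (mf a b w) :=
  Iff.rfl

lemma mf_comm (a b : V) (l : List V) : mf a b l = mf b a l :=
  List.filter_congr (by intro c _; simp [or_comm])

lemma alt_comm {w : List V} {a b : V} : Alternates w a b ↔ Alternates w b a := by
  rw [alt_def, alt_def, mf_comm]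

lemma mem_mf {a b c : V} {l : List V} (h : c ∈ mf a b l) : (c = a ∨ c = b) ∧ c ∈ l := by
  refine ⟨?_, List.mem_of_mem_filter h⟩
  have := List.of_mem_filter h
  simpa using this

lemma mf_append (a b : V) (l₁ l₂ : List V) : mf a b (l₁ ++ l₂) = mf a b l₁ ++ mf a b l₂ :=
  List.filter_append ..

lemma mf_cons_left (a b : V) (l : List V) : mf a b (a :: l) = a :: mf a b l := by
  simp [mf]

lemma mf_cons_right (a b : V) (l : List V) : mf a b (b :: l) = b :: mf a b l := by
  simp [mf]

lemma mf_cons_of_ne {a b c : V} (l : List V) (h1 : c ≠ a) (h2 : c ≠ b) :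
    mf a b (c :: l) = mf a b l := by
  simp [mf, h1, h2]

lemma count_mf_left (a b : V) (l : List V) : (mf a b l).count a = l.count a :=
  List.count_filter (by simp)

lemma count_mf_right (a b : V) (l : List V) : (mf a b l).count b = l.count b :=
  List.count_filter (by simp)

lemma mf_length (a b : V) (hab : a ≠ b) (l : List V) :
    (mf a b l).length = l.count a + l.count b := by
  induction l with
  | nil => simp [mf]
  | cons c t ih =>
    by_cases h1 : c = a
    · subst h1
      rw [mf_cons_left, List.count_cons_self, List.count_cons_of_ne hab]
      simp only [List.length_cons, ih]; omega
    · by_cases h2 : c = b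
      · subst h2
        rw [mf_cons_right, List.count_cons_self, List.count_cons_of_ne (Ne.symm hab)]
        simp only [List.length_cons, ih]; omega
      · rw [mf_cons_of_ne _ h1 h2, List.count_cons_of_ne h1,
          List.count_cons_of_ne h2]
        exact ih

omit [DecidableEq V] in
lemma chain'_of_length_le_one {R : V → V → Prop} {l : List V} (h : l.length ≤ 1) :
    List.Chain' R l := by
  match l with
  | [] => exact List.isChain_nil
  | [c] => exact List.isChain_singleton c
  | c :: d :: t => simp at h

/-- Counting lemma for alternating two-letter words. -/
lemma chain_count {a b : V} (hab : a ≠ b) :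
    ∀ (l : List V), (∀ c ∈ l, c = a ∨ c = b) →
      (List.Chain' (· ≠ ·) l → l.count a ≤ l.count b + 1) ∧
      (List.Chain' (· ≠ ·) (a :: l) → l.count a ≤ l.count b) := by
  intro l
  induction l with
  | nil => simp
  | cons c t ih =>
    intro hmem
    have hmt : ∀ c ∈ t, c = a ∨ c = b := fun d hd => hmem d (List.mem_cons_of_mem _ hd)
    have iht := ih hmt
    constructor
    · intro hch
      rcases hmem c (List.mem_cons_self) with rfl | rfl
      · have := iht.2 hch
        rw [List.count_cons_self, List.count_cons_of_ne hab]
        omega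
      · have := iht.1 ((List.isChain_cons.mp hch).2)
        rw [List.count_cons_self, List.count_cons_of_ne (Ne.symm hab)]
        omega
    · intro hch
      have h1 := List.isChain_cons.mp hch
      have hac : a ≠ c := by
        have := h1.1 c (by simp)
        exact this
      rcases hmem c (List.mem_cons_self) with rfl | rfl
      · exact absurd rfl hac
      · have := iht.1 ((List.isChain_cons.mp h1.2).2)
        rw [List.count_cons_self, List.count_cons_of_ne (Ne.symm hab)]
        omega

lemma alt_infix {w u : List V} {a b : V} (h : Alternates w a b) (hu : u <:+: w) :
    List.Chain' (· ≠ ·) (mf a b u) :=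
  (alt_def.mp h).infix (List.IsInfix.filter _ hu)

/-- The key counting consequence of alternation, for arbitrary infixes. -/
lemma count_le_of_alt {w u : List V} {a b : V} (hab : a ≠ b) (h : Alternates w a b)
    (hu : u <:+: w) : u.count a ≤ u.count b + 1 := by
  have hch := alt_infix h hu
  have hmem : ∀ c ∈ mf a b u, c = a ∨ c = b := fun c hc => (mem_mf hc).1
  have := (chain_count hab (mf a b u) hmem).1 hch
  rwa [count_mf_left, count_mf_right] at this

lemma mf_eq_nil {a b : V} {l : List V} (ha : a ∉ l) (hb : b ∉ l) : mf a b l = [] := by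
  apply List.filter_eq_nil_iff.mpr
  intro c hc
  simp only [decide_eq_true_eq]
  rintro (rfl | rfl)
  · exact ha hc
  · exact hb hc

lemma mf_eq_single {a b : V} {l : List V} (hab : a ≠ b) (ha : a ∉ l) (hb : l.count b = 1) :
    mf a b l = [b] := by
  induction l with
  | nil => simp at hb
  | cons c t ih =>
    have hat : a ∉ t := fun h => ha (List.mem_cons_of_mem _ h)
    have hac : c ≠ a := fun h => ha (h ▸ List.mem_cons_self)
    by_cases hcb : c = b
    · subst hcb
      rw [List.count_cons_self] at hb
      have hbt : c ∉ t := by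
        rw [← List.count_eq_zero]; omega
      rw [mf_cons_right, mf_eq_nil hat hbt]
    · rw [List.count_cons_of_ne hcb] at hb
      rw [mf_cons_of_ne _ hac hcb]
      exact ih hat hb

lemma mf_eq_single' {a b : V} {l : List V} (hab : a ≠ b) (hb : b ∉ l) (ha : l.count a = 1) :
    mf a b l = [a] := by
  rw [mf_comm]; exact mf_eq_single (Ne.symm hab) hb ha

/-- `a` occurs in `l` and no `b` occurs before the first `a`. -/
def Before (l : List V) (a b : V) : Prop :=
  ∃ u t, l = u ++ a :: t ∧ a ∉ u ∧ b ∉ u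

lemma before_cons {l : List V} {a b c : V} (hca : c ≠ a) (hcb : c ≠ b)
    (h : Before l a b) : Before (c :: l) a b := by
  obtain ⟨u, t, rfl, hau, hbu⟩ := h
  refine ⟨c :: u, t, rfl, ?_, ?_⟩
  · simp only [List.mem_cons]
    rintro (h | h)
    · exact hca h.symm
    · exact hau h
  · simp only [List.mem_cons]
    rintro (h | h)
    · exact hcb h.symm
    · exact hbu h

lemma before_total {l : List V} {a b : V} (hab : a ≠ b) (ha : a ∈ l) (hb : b ∈ l) :
    Before l a b ∨ Before l b a := by
  induction l with
  | nil => simp at ha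
  | cons c t ih =>
    by_cases hca : c = a
    · exact Or.inl ⟨[], t, by simp [hca], by simp, by simp⟩
    · by_cases hcb : c = b
      · exact Or.inr ⟨[], t, by simp [hcb], by simp, by simp⟩
      · have ha' : a ∈ t := by
          rcases List.mem_cons.mp ha with h | h
          · exact absurd h.symm hca
          · exact h
        have hb' : b ∈ t := by
          rcases List.mem_cons.mp hb with h | h
          · exact absurd h.symm hcb
          · exact h
        rcases ih ha' hb' with h | h
        · exact Or.inl (before_cons hca hcb h)
        · exact Or.inr (before_cons hcb hca h)

lemma mf_of_before {a b : V} {l : List V} (hab : a ≠ b) (ha : l.count a = 1)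
    (hb : l.count b = 1) (h : Before l a b) : mf a b l = [a, b] := by
  obtain ⟨u, t, rfl, hau, hbu⟩ := h
  have hcau : u.count a = 0 := List.count_eq_zero.mpr hau
  have hcbu : u.count b = 0 := List.count_eq_zero.mpr hbu
  rw [List.count_append, List.count_cons_self, hcau] at ha
  rw [List.count_append, List.count_cons_of_ne hab, hcbu] at hb
  have hat : a ∉ t := by rw [← List.count_eq_zero]; omega
  rw [mf_append, mf_eq_nil hau hbu, mf_cons_left, mf_eq_single hab hat (by omega)]
  rfl

lemma before_of_indexOf {a b : V} {l : List V} (hab : a ≠ b) (ha : a ∈ l) (hb : b ∈ l)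
    (h : l.idxOf a < l.idxOf b) : Before l a b := by
  induction l with
  | nil => simp at ha
  | cons c t ih =>
    by_cases hca : c = a
    · exact ⟨[], t, by simp [hca], by simp, by simp⟩
    · by_cases hcb : c = b
      · subst hcb
        rw [List.idxOf_cons_self] at h
        omega
      · have ha' : a ∈ t := by
          rcases List.mem_cons.mp ha with h' | h'
          · exact absurd h'.symm hca
          · exact h'
        have hb' : b ∈ t := by
          rcases List.mem_cons.mp hb with h' | h'
          · exact absurd h'.symm hcb
          · exact h'
        rw [List.idxOf_cons_ne _ hca, List.idxOf_cons_ne _ hcb] at h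
        exact before_cons hca hcb (ih ha' hb' (Nat.succ_lt_succ_iff.mp h))

lemma mf_pair_cases {a b : V} {l : List V} (hab : a ≠ b) (ha : l.count a = 1)
    (hb : l.count b = 1) : mf a b l = [a, b] ∨ mf a b l = [b, a] := by
  have hma : a ∈ l := List.count_pos_iff.mp (by omega)
  have hmb : b ∈ l := List.count_pos_iff.mp (by omega)
  rcases Nat.lt_trichotomy (l.idxOf a) (l.idxOf b) with h | h | h
  · exact Or.inl (mf_of_before hab ha hb (before_of_indexOf hab hma hmb h))
  · exact absurd ((List.idxOf_inj hma).mp h) hab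
  · right
    rw [mf_comm]
    exact mf_of_before (Ne.symm hab) hb ha (before_of_indexOf (Ne.symm hab) hmb hma h)

lemma indexOf_lt_of_mf {a b : V} {l : List V} (hab : a ≠ b) (ha : l.count a = 1)
    (hb : l.count b = 1) (h : mf a b l = [a, b]) : l.idxOf a < l.idxOf b := by
  have hma : a ∈ l := List.count_pos_iff.mp (by omega)
  have hmb : b ∈ l := List.count_pos_iff.mp (by omega)
  rcases Nat.lt_trichotomy (l.idxOf a) (l.idxOf b) with h' | h' | h'
  · exact h'
  · exact absurd ((List.idxOf_inj hma).mp h') hab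
  · exfalso
    have h2 : mf a b l = [b, a] := by
      rw [mf_comm]
      exact mf_of_before (Ne.symm hab) hb ha (before_of_indexOf (Ne.symm hab) hmb hma h')
    rw [h] at h2
    injection h2 with h3 h4
    exact hab h3

lemma mf_head_of_before {a b : V} {l : List V} (h : Before l a b) :
    ∃ s, mf a b l = a :: s := by
  obtain ⟨u, t, rfl, hau, hbu⟩ := h
  refine ⟨mf a b t, ?_⟩
  rw [mf_append, mf_eq_nil hau hbu, mf_cons_left]
  rfl

/-- Glue pieces with a `v` before each piece. -/
def vglue (v : V) : List (List V) → List V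
  | [] => []
  | g :: L => v :: (g ++ vglue v L)

lemma vglue_append (v : V) (L₁ L₂ : List (List V)) :
    vglue v (L₁ ++ L₂) = vglue v L₁ ++ vglue v L₂ := by
  induction L₁ with
  | nil => simp [vglue]
  | cons g L ih => simp [vglue, ih]

lemma exists_decomp (v : V) (w : List V) :
    ∃ g₀ L, w = g₀ ++ vglue v L ∧ v ∉ g₀ ∧ (∀ g ∈ L, v ∉ g) ∧ L.length = w.count v := by
  induction w with
  | nil => exact ⟨[], [], by simp [vglue], by simp, by simp, by simp⟩
  | cons c t ih =>
    obtain ⟨g₀, L, heq, hvg, hvL, hlen⟩ := ih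
    by_cases hc : c = v
    · subst hc
      refine ⟨[], g₀ :: L, ?_, by simp, ?_, ?_⟩
      · simp [vglue, heq]
      · intro g hg
        rcases List.mem_cons.mp hg with rfl | hg
        · exact hvg
        · exact hvL g hg
      · simp [List.count_cons_self, hlen]
    · refine ⟨c :: g₀, L, by simp [heq], ?_, hvL, ?_⟩
      · simp only [List.mem_cons]
        rintro (h | h)
        · exact hc h.symm
        · exact hvg h
      · rw [List.count_cons_of_ne hc]
        exact hlen

lemma mf_vglue_cons {a b v : V} (hav : a ≠ v) (hbv : b ≠ v) (g : List V) (L : List (List V)) :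
    mf a b (vglue v (g :: L)) = mf a b g ++ mf a b (vglue v L) := by
  show mf a b (v :: (g ++ vglue v L)) = _
  rw [mf_cons_of_ne _ (fun h => hav h.symm) (fun h => hbv h.symm), mf_append]

lemma mf_vglue_nil {a b v : V} : mf a b (vglue v ([] : List (List V))) = [] := rfl

/-- An inner piece (one followed by another `v`) sits in `w` surrounded by `v`s. -/
lemma inner_infix {w g₀ : List V} {v : V} {L₁ L₂ : List (List V)} {g : List V}
    (hw : w = g₀ ++ vglue v (L₁ ++ g :: L₂)) (hne : L₂ ≠ []) :
    v :: g ++ [v] <:+: w := by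
  obtain ⟨g', L₃, rfl⟩ : ∃ g' L₃, L₂ = g' :: L₃ := by
    cases L₂ with
    | nil => exact absurd rfl hne
    | cons g' L₃ => exact ⟨g', L₃, rfl⟩
  refine ⟨g₀ ++ vglue v L₁, g' ++ vglue v L₃, ?_⟩
  rw [hw, vglue_append]
  show _ = g₀ ++ (vglue v L₁ ++ vglue v (g :: g' :: L₃))
  show (g₀ ++ vglue v L₁) ++ (v :: g ++ [v]) ++ (g' ++ vglue v L₃) = _
  simp [vglue, List.append_assoc]

lemma count_piece_le {w g : List V} {a v : V} (hav : a ≠ v) (halt : Alternates w a v)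
    (hg : g <:+: w) (hvg : v ∉ g) : g.count a ≤ 1 := by
  have := count_le_of_alt hav halt hg
  rwa [List.count_eq_zero.mpr hvg] at this

lemma count_piece_eq {w g : List V} {a v : V} (hav : a ≠ v) (halt : Alternates w a v)
    (hg : v :: g ++ [v] <:+: w) (hvg : v ∉ g) : g.count a = 1 := by
  have hg' : g <:+: w := List.IsInfix.trans ⟨[v], [v], by simp⟩ hg
  have hle := count_piece_le hav halt hg' hvg
  have halt' : Alternates w v a := alt_comm.mp halt
  have hge := count_le_of_alt (Ne.symm hav) halt' hg
  have hcv : (v :: g ++ [v]).count v = 2 := by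
    simp [List.count_append, List.count_cons_self, List.count_eq_zero.mpr hvg]
  have hca : (v :: g ++ [v]).count a = g.count a := by
    simp [List.count_append, List.count_cons_of_ne (Ne.symm hav),
      List.count_singleton', if_neg (show ¬ v = a from fun h => hav h.symm)]
  rw [hcv, hca] at hge
  omega

/-- Order propagation across inner gaps. -/
lemma prop_pieces {a b v : V} (hab : a ≠ b) (hav : a ≠ v) (hbv : b ≠ v) :
    ∀ (L : List (List V)) (prev : List V),
      List.Chain' (· ≠ ·) (mf a b (vglue v (prev :: L))) →
      (∀ g ∈ L, g.count a = 1 ∧ g.count b = 1) →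
      mf a b prev = [a, b] →
      ∀ g ∈ L, mf a b g = [a, b] := by
  intro L
  induction L with
  | nil => intro prev _ _ _ g hg; simp at hg
  | cons g L' ih =>
    intro prev hch hcnt hprev g'' hg''
    rw [mf_vglue_cons hav hbv, hprev] at hch
    have h2 := List.isChain_append.mp hch
    have hch2 : List.Chain' (· ≠ ·) (mf a b (vglue v (g :: L'))) := h2.2.1
    have hgab : mf a b g = [a, b] := by
      rcases mf_pair_cases hab (hcnt g (List.mem_cons_self)).1
        (hcnt g (List.mem_cons_self)).2 with h | h
      · exact h
      · exfalso
        have hhead : (mf a b (vglue v (g :: L'))).head? = some b := by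
          rw [mf_vglue_cons hav hbv, h]
          rfl
        have := h2.2.2 b (by rfl) b hhead
        exact this rfl
    rcases List.mem_cons.mp hg'' with rfl | hg''
    · exact hgab
    · exact ih g hch2 (fun g h => hcnt g (List.mem_cons_of_mem _ h)) hgab g'' hg''

/-- Boundary condition for the initial piece. -/
lemma first_piece {w g₀ B : List V} {v a b : V} {L : List (List V)}
    (hab : a ≠ b) (hav : a ≠ v) (hbv : b ≠ v)
    (hch : List.Chain' (· ≠ ·) (mf a b w))
    (hw : w = g₀ ++ vglue v (B :: L))
    (hmfB : mf a b B = [a, b])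
    (hca : g₀.count a ≤ 1) (hcb : g₀.count b ≤ 1)
    (hmem : a ∈ g₀) : mf a b g₀ = [a, b] := by
  rw [hw, mf_append, mf_vglue_cons hav hbv, hmfB] at hch
  have h2 := List.isChain_append.mp hch
  have hlast : ∀ c ∈ (mf a b g₀).getLast?, c ≠ a := by
    intro c hc
    exact h2.2.2 c hc a rfl
  have hca1 : g₀.count a = 1 := by
    have := List.count_pos_iff.mpr hmem
    omega
  by_cases hmb : b ∈ g₀
  · have hcb1 : g₀.count b = 1 := by
      have := List.count_pos_iff.mpr hmb
      omega
    rcases mf_pair_cases hab hca1 hcb1 with h | h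
    · exact h
    · exfalso
      exact hlast a (by rw [h]; rfl) rfl
  · exfalso
    have h1 : mf a b g₀ = [a] := mf_eq_single' hab hmb hca1
    exact hlast a (by rw [h1]; rfl) rfl

/-- Boundary condition for the final piece. -/
lemma last_piece {w g₀ gl gt : List V} {v a b : V} {L₀ : List (List V)}
    (hab : a ≠ b) (hav : a ≠ v) (hbv : b ≠ v)
    (hch : List.Chain' (· ≠ ·) (mf a b w))
    (hw : w = g₀ ++ vglue v ((L₀ ++ [gl]) ++ [gt]))
    (hmfgl : mf a b gl = [a, b])
    (hca : gt.count a ≤ 1) (hcb : gt.count b ≤ 1)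
    (hmem : b ∈ gt) : mf a b gt = [a, b] := by
  have hw' : mf a b w = (mf a b g₀ ++ mf a b (vglue v L₀) ++ mf a b gl) ++ mf a b gt := by
    have h1 : mf a b (vglue v [gl]) = mf a b gl := by
      rw [mf_vglue_cons hav hbv, mf_vglue_nil, List.append_nil]
    have h2 : mf a b (vglue v [gt]) = mf a b gt := by
      rw [mf_vglue_cons hav hbv, mf_vglue_nil, List.append_nil]
    rw [hw, vglue_append, vglue_append]
    simp only [mf_append, h1, h2, List.append_assoc]
  rw [hw'] at hch
  have h2 := List.isChain_append.mp hch
  have hlast : (mf a b g₀ ++ mf a b (vglue v L₀) ++ mf a b gl).getLast? = some b := by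
    rw [hmfgl, List.getLast?_append]
    rfl
  have hjun : ∀ d ∈ (mf a b gt).head?, b ≠ d := by
    intro d hd
    exact h2.2.2 b (by rw [hlast]; rfl) d hd
  have hcb1 : gt.count b = 1 := by
    have := List.count_pos_iff.mpr hmem
    omega
  by_cases hma : a ∈ gt
  · have hca1 : gt.count a = 1 := by
      have := List.count_pos_iff.mpr hma
      omega
    rcases mf_pair_cases hab hca1 hcb1 with h | h
    · exact h
    · exfalso
      exact hjun b (by rw [h]; rfl) rfl
  · exfalso
    have h1 : mf a b gt = [b] := mf_eq_single hab hma hcb1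
    exact hjun b (by rw [h1]; rfl) rfl

/-- Assembling the alternating word for the pair `x, z`. -/
lemma join_chain {x z v : V} (hxz : x ≠ z) (hxv : x ≠ v) (hzv : z ≠ v) :
    ∀ (L : List (List V)) (T : List V),
      (∀ g ∈ L, mf x z g = [x, z]) →
      List.Chain' (· ≠ ·) T → (∀ c ∈ T.head?, c ≠ z) →
      List.Chain' (· ≠ ·) (mf x z (vglue v L) ++ T) ∧
        (∀ c ∈ (mf x z (vglue v L) ++ T).head?, c ≠ z) := by
  intro L
  induction L with
  | nil =>
    intro T _ hT hTh
    rw [mf_vglue_nil, List.nil_append]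
    exact ⟨hT, hTh⟩
  | cons g L' ih =>
    intro T hL hT hTh
    obtain ⟨ihc, ihh⟩ := ih T (fun g h => hL g (List.mem_cons_of_mem _ h)) hT hTh
    rw [mf_vglue_cons hxv hzv, hL g (List.mem_cons_self)]
    constructor
    · show List.Chain' (· ≠ ·) (x :: z :: (mf x z (vglue v L') ++ T))
      apply List.isChain_cons.mpr
      refine ⟨?_, ?_⟩
      · intro y hy
        simp only [List.head?_cons, Option.mem_def, Option.some.injEq] at hy
        rw [← hy]
        exact hxz
      · apply List.isChain_cons.mpr
        refine ⟨?_, ihc⟩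
        intro y hy
        exact fun h => ihh y hy h.symm
    · intro c hc
      simp only [List.cons_append, List.head?_cons, Option.mem_def, Option.some.injEq] at hc
      rw [← hc]
      exact hxz

lemma mem_of_head? {c : V} {l : List V} (h : c ∈ l.head?) : c ∈ l := by
  cases l with
  | nil => simp at h
  | cons d t =>
    simp only [List.head?_cons, Option.mem_def, Option.some.injEq] at h
    rw [← h]
    exact List.mem_cons_self

lemma mem_of_getLast? {c : V} {l : List V} (h : l.getLast? = some c) : c ∈ l := by
  obtain ⟨hne, rfl⟩ := List.mem_getLast?_eq_getLast (by rw [h]; rfl)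
  exact List.getLast_mem hne

lemma mf_vglue_single {a b v : V} (hav : a ≠ v) (hbv : b ≠ v) (g : List V) :
    mf a b (vglue v [g]) = mf a b g := by
  rw [mf_vglue_cons hav hbv, mf_vglue_nil, List.append_nil]

/-- The main combinatorial lemma: transitivity of the gap-order. -/
lemma main_alt {w g₀ B gt : List V} {v x y z : V} {rs' : List (List V)}
    (hw : w = g₀ ++ vglue v ((B :: rs') ++ [gt]))
    (hvg₀ : v ∉ g₀) (hvB : v ∉ B) (hvrs : ∀ g ∈ rs', v ∉ g) (hvgt : v ∉ gt)
    (hxv : x ≠ v) (hyv : y ≠ v) (hzv : z ≠ v)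
    (hxy : x ≠ y) (hyz : y ≠ z) (hxz : x ≠ z)
    (ax : Alternates w x v) (ay : Alternates w y v) (az : Alternates w z v)
    (axy : Alternates w x y) (ayz : Alternates w y z)
    (hBxy : B.idxOf x < B.idxOf y) (hByz : B.idxOf y < B.idxOf z) :
    Alternates w x z := by
  have hvmem : ∀ g ∈ B :: rs', v ∉ g := by
    intro g hg
    rcases List.mem_cons.mp hg with rfl | hg
    · exact hvB
    · exact hvrs g hg
  -- each neighbour occurs exactly once in each inner piece
  have hcount : ∀ a : V, a ≠ v → Alternates w a v → ∀ g ∈ B :: rs', g.count a = 1 := by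
    intro a hav halt g hg
    obtain ⟨L₁, L₂, hsplit⟩ := List.append_of_mem hg
    have hw' : w = g₀ ++ vglue v (L₁ ++ g :: (L₂ ++ [gt])) := by
      rw [hw, hsplit]
      simp [List.append_assoc]
    exact count_piece_eq hav halt (inner_infix hw' (by simp)) (hvmem g hg)
  have cntx := hcount x hxv ax
  have cnty := hcount y hyv ay
  have cntz := hcount z hzv az
  -- boundary pieces have at most one occurrence
  have hg₀inf : g₀ <:+: w := ⟨[], vglue v ((B :: rs') ++ [gt]), by rw [hw]; rfl⟩
  have hgtinf : gt <:+: w := by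
    refine ⟨g₀ ++ vglue v (B :: rs') ++ [v], [], ?_⟩
    rw [hw, vglue_append]
    show _ = g₀ ++ (vglue v (B :: rs') ++ (v :: (gt ++ [])))
    simp [List.append_assoc]
  have cntg₀ : ∀ a : V, a ≠ v → Alternates w a v → g₀.count a ≤ 1 :=
    fun a hav halt => count_piece_le hav halt hg₀inf hvg₀
  have cntgt : ∀ a : V, a ≠ v → Alternates w a v → gt.count a ≤ 1 :=
    fun a hav halt => count_piece_le hav halt hgtinf hvgt
  -- chains
  have hchxy : List.Chain' (· ≠ ·) (mf x y w) := alt_def.mp axy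
  have hchyz : List.Chain' (· ≠ ·) (mf y z w) := alt_def.mp ayz
  have hmidinf : vglue v (B :: rs') <:+: w :=
    ⟨g₀, vglue v [gt], by rw [hw, vglue_append]; simp [List.append_assoc]⟩
  -- order in the first inner gap
  have memxB : x ∈ B := List.count_pos_iff.mp (by rw [cntx B (List.mem_cons_self)]; omega)
  have memyB : y ∈ B := List.count_pos_iff.mp (by rw [cnty B (List.mem_cons_self)]; omega)
  have memzB : z ∈ B := List.count_pos_iff.mp (by rw [cntz B (List.mem_cons_self)]; omega)
  have mfBxy : mf x y B = [x, y] :=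
    mf_of_before hxy (cntx B (List.mem_cons_self)) (cnty B (List.mem_cons_self))
      (before_of_indexOf hxy memxB memyB hBxy)
  have mfByz : mf y z B = [y, z] :=
    mf_of_before hyz (cnty B (List.mem_cons_self)) (cntz B (List.mem_cons_self))
      (before_of_indexOf hyz memyB memzB hByz)
  -- propagation to all inner pieces
  have allxy : ∀ g ∈ B :: rs', mf x y g = [x, y] := by
    intro g hg
    rcases List.mem_cons.mp hg with rfl | hg
    · exact mfBxy
    · exact prop_pieces hxy hxv hyv rs' B (alt_infix axy hmidinf)
        (fun g' h => ⟨cntx g' (List.mem_cons_of_mem _ h), cnty g' (List.mem_cons_of_mem _ h)⟩)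
        mfBxy g hg
  have allyz : ∀ g ∈ B :: rs', mf y z g = [y, z] := by
    intro g hg
    rcases List.mem_cons.mp hg with rfl | hg
    · exact mfByz
    · exact prop_pieces hyz hyv hzv rs' B (alt_infix ayz hmidinf)
        (fun g' h => ⟨cnty g' (List.mem_cons_of_mem _ h), cntz g' (List.mem_cons_of_mem _ h)⟩)
        mfByz g hg
  -- hence order x < z inside every inner piece
  have allxz : ∀ g ∈ B :: rs', mf x z g = [x, z] := by
    intro g hg
    have h1 := indexOf_lt_of_mf hxy (cntx g hg) (cnty g hg) (allxy g hg)
    have h2 := indexOf_lt_of_mf hyz (cnty g hg) (cntz g hg) (allyz g hg)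
    have memx : x ∈ g := List.count_pos_iff.mp (by rw [cntx g hg]; omega)
    have memz : z ∈ g := List.count_pos_iff.mp (by rw [cntz g hg]; omega)
    exact mf_of_before hxz (cntx g hg) (cntz g hg)
      (before_of_indexOf hxz memx memz (lt_trans h1 h2))
  -- the final piece
  obtain ⟨L₀, gl, hcat⟩ := (B :: rs').eq_nil_or_concat.resolve_left (List.cons_ne_nil _ _)
  have hcat' : B :: rs' = L₀ ++ [gl] := by rw [hcat]; exact List.concat_eq_append
  have hglmem : gl ∈ B :: rs' := by rw [hcat']; simp
  have hwlast : w = g₀ ++ vglue v ((L₀ ++ [gl]) ++ [gt]) := by rw [hw, hcat']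
  have hTfacts : List.Chain' (· ≠ ·) (mf x z gt) ∧ ∀ c ∈ (mf x z gt).head?, c ≠ z := by
    by_cases hzgt : z ∈ gt
    · have mfgtyz : mf y z gt = [y, z] :=
        last_piece hyz hyv hzv hchyz hwlast (allyz gl hglmem)
          (cntgt y hyv ay) (cntgt z hzv az) hzgt
      have hygt : y ∈ gt :=
        List.mem_of_mem_filter (show y ∈ mf y z gt by rw [mfgtyz]; simp)
      have mfgtxy : mf x y gt = [x, y] :=
        last_piece hxy hxv hyv hchxy hwlast (allxy gl hglmem)
          (cntgt x hxv ax) (cntgt y hyv ay) hygt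
      have hxgt : x ∈ gt :=
        List.mem_of_mem_filter (show x ∈ mf x y gt by rw [mfgtxy]; simp)
      have cx : gt.count x = 1 := by
        have := List.count_pos_iff.mpr hxgt
        have := cntgt x hxv ax
        omega
      have cy : gt.count y = 1 := by
        have := List.count_pos_iff.mpr hygt
        have := cntgt y hyv ay
        omega
      have cz : gt.count z = 1 := by
        have := List.count_pos_iff.mpr hzgt
        have := cntgt z hzv az
        omega
      have h1 := indexOf_lt_of_mf hxy cx cy mfgtxy
      have h2 := indexOf_lt_of_mf hyz cy cz mfgtyz
      have mfgtxz : mf x z gt = [x, z] :=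
        mf_of_before hxz cx cz (before_of_indexOf hxz hxgt hzgt (lt_trans h1 h2))
      constructor
      · rw [mfgtxz]
        exact List.isChain_cons_cons.mpr ⟨hxz, List.isChain_singleton _⟩
      · intro c hc
        rw [mfgtxz] at hc
        simp only [List.head?_cons, Option.mem_def, Option.some.injEq] at hc
        rw [← hc]
        exact hxz
    · constructor
      · apply chain'_of_length_le_one
        rw [mf_length x z hxz, List.count_eq_zero.mpr hzgt]
        have := cntgt x hxv ax
        omega
      · intro c hc
        have hcmem := mem_of_head? hc
        rcases (mem_mf hcmem).1 with rfl | rfl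
        · exact hxz
        · exact absurd (mem_mf hcmem).2 hzgt
  -- the initial piece
  have hA₀facts : List.Chain' (· ≠ ·) (mf x z g₀) ∧ ∀ c ∈ (mf x z g₀).getLast?, c ≠ x := by
    have hwfp : w = g₀ ++ vglue v (B :: (rs' ++ [gt])) := by rw [hw]; rfl
    by_cases hxg₀ : x ∈ g₀
    · have mfg₀xy : mf x y g₀ = [x, y] :=
        first_piece hxy hxv hyv hchxy hwfp mfBxy (cntg₀ x hxv ax) (cntg₀ y hyv ay) hxg₀
      have hyg₀ : y ∈ g₀ :=
        List.mem_of_mem_filter (show y ∈ mf x y g₀ by rw [mfg₀xy]; simp)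
      have mfg₀yz : mf y z g₀ = [y, z] :=
        first_piece hyz hyv hzv hchyz hwfp mfByz (cntg₀ y hyv ay) (cntg₀ z hzv az) hyg₀
      have hzg₀ : z ∈ g₀ :=
        List.mem_of_mem_filter (show z ∈ mf y z g₀ by rw [mfg₀yz]; simp)
      have cx : g₀.count x = 1 := by
        have := List.count_pos_iff.mpr hxg₀
        have := cntg₀ x hxv ax
        omega
      have cy : g₀.count y = 1 := by
        have := List.count_pos_iff.mpr hyg₀
        have := cntg₀ y hyv ay
        omega
      have cz : g₀.count z = 1 := by
        have := List.count_pos_iff.mpr hzg₀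
        have := cntg₀ z hzv az
        omega
      have h1 := indexOf_lt_of_mf hxy cx cy mfg₀xy
      have h2 := indexOf_lt_of_mf hyz cy cz mfg₀yz
      have mfg₀xz : mf x z g₀ = [x, z] :=
        mf_of_before hxz cx cz (before_of_indexOf hxz hxg₀ hzg₀ (lt_trans h1 h2))
      constructor
      · rw [mfg₀xz]
        exact List.isChain_cons_cons.mpr ⟨hxz, List.isChain_singleton _⟩
      · intro c hc
        rw [mfg₀xz] at hc
        have : c = z := by
          simp only [List.getLast?_cons_cons, List.getLast?_singleton,
            Option.mem_def, Option.some.injEq] at hc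
          exact hc.symm
        rw [this]
        exact Ne.symm hxz
    · constructor
      · apply chain'_of_length_le_one
        rw [mf_length x z hxz, List.count_eq_zero.mpr hxg₀]
        have := cntg₀ z hzv az
        omega
      · intro c hc
        have hcmem := mem_of_getLast? hc
        rcases (mem_mf hcmem).1 with rfl | rfl
        · exact absurd (mem_mf hcmem).2 hxg₀
        · exact Ne.symm hxz
  -- assemble
  obtain ⟨hjch, _⟩ := join_chain hxz hxv hzv (B :: rs') (mf x z gt) allxz hTfacts.1 hTfacts.2
  rw [alt_def]
  have hsplit : mf x z w = mf x z g₀ ++ (mf x z (vglue v (B :: rs')) ++ mf x z gt) := by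
    rw [hw, vglue_append, mf_append, mf_append, mf_vglue_single hxv hzv]
  rw [hsplit]
  apply List.isChain_append.mpr
  refine ⟨hA₀facts.1, hjch, ?_⟩
  intro c hc d hd
  have hdx : d = x := by
    rw [mf_vglue_cons hxv hzv, allxz B (List.mem_cons_self)] at hd
    simp only [List.cons_append, List.head?_cons, Option.mem_def, Option.some.injEq] at hd
    exact hd.symm
  rw [hdx]
  exact hA₀facts.2 c hc

/-- The list of first occurrences of letters of `l`, in order. -/
def fo : List V → List V
  | [] => []
  | c :: t => c :: fo (t.filter (fun d => decide (d ≠ c)))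
termination_by l => l.length
decreasing_by
  simp_wf
  have := List.length_filter_le (fun x => !decide (x.1 = c)) t.attach; simp only [List.length_attach] at this
  omega

lemma fo_nil : fo ([] : List V) = [] := fo.eq_1

lemma fo_cons (c : V) (t : List V) :
    fo (c :: t) = c :: fo (t.filter (fun d => decide (d ≠ c))) := fo.eq_2 c t

lemma mem_fo_aux : ∀ (n : ℕ) (l : List V), l.length ≤ n → ∀ a : V, (a ∈ fo l ↔ a ∈ l) := by
  intro n
  induction n with
  | zero =>
    intro l hl a
    rw [List.length_eq_zero_iff.mp (Nat.le_zero.mp hl)]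
    rw [fo_nil]
  | succ n ih =>
    intro l hl a
    cases l with
    | nil => rw [fo_nil]
    | cons c t =>
      rw [fo_cons]
      have hlen : (t.filter (fun d => decide (d ≠ c))).length ≤ n := by
        have := List.length_filter_le (fun d => decide (d ≠ c)) t
        simp only [List.length_cons] at hl
        omega
      by_cases hac : a = c
      · subst hac
        simp [List.mem_cons]
      · simp only [List.mem_cons, hac, false_or]
        rw [ih _ hlen a, List.mem_filter]
        simp [hac]

lemma mem_fo {l : List V} {a : V} : a ∈ fo l ↔ a ∈ l := mem_fo_aux l.length l le_rfl a

lemma nodup_fo_aux : ∀ (n : ℕ) (l : List V), l.length ≤ n → (fo l).Nodup := by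
  intro n
  induction n with
  | zero =>
    intro l hl
    rw [List.length_eq_zero_iff.mp (Nat.le_zero.mp hl), fo_nil]
    exact List.nodup_nil
  | succ n ih =>
    intro l hl
    cases l with
    | nil => rw [fo_nil]; exact List.nodup_nil
    | cons c t =>
      rw [fo_cons]
      have hlen : (t.filter (fun d => decide (d ≠ c))).length ≤ n := by
        have := List.length_filter_le (fun d => decide (d ≠ c)) t
        simp only [List.length_cons] at hl
        omega
      refine List.nodup_cons.mpr ⟨?_, ih _ hlen⟩
      intro hc
      have := (List.mem_filter.mp (mem_fo.mp hc)).2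
      simp at this

lemma nodup_fo {l : List V} : (fo l).Nodup := nodup_fo_aux l.length l le_rfl

lemma mf_fo_aux {a b : V} (hab : a ≠ b) : ∀ (n : ℕ) (l : List V), l.length ≤ n →
    b ∈ l → Before l a b → mf a b (fo l) = [a, b] := by
  intro n
  induction n with
  | zero =>
    intro l hl hb _
    rw [List.length_eq_zero_iff.mp (Nat.le_zero.mp hl)] at hb
    simp at hb
  | succ n ih =>
    intro l hl hb hbef
    cases l with
    | nil => simp at hb
    | cons c t =>
      have hlen : ∀ e : V, (t.filter (fun d => decide (d ≠ e))).length ≤ n := by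
        intro e
        have := List.length_filter_le (fun d => decide (d ≠ e)) t
        simp only [List.length_cons] at hl
        omega
      by_cases hca : c = a
      · subst hca
        rw [fo_cons, mf_cons_left]
        have hbt : b ∈ t := by
          rcases List.mem_cons.mp hb with h | h
          · exact absurd h.symm hab
          · exact h
        have hbt' : b ∈ t.filter (fun d => decide (d ≠ c)) :=
          List.mem_filter.mpr ⟨hbt, by simp [Ne.symm hab]⟩
        have hbfo : b ∈ fo (t.filter (fun d => decide (d ≠ c))) := mem_fo.mpr hbt'
        have hafo : c ∉ fo (t.filter (fun d => decide (d ≠ c))) := by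
          intro h
          have := (List.mem_filter.mp (mem_fo.mp h)).2
          simp at this
        rw [mf_eq_single hab hafo (List.count_eq_one_of_mem nodup_fo hbfo)]
      · obtain ⟨u, s, heq, hau, hbu⟩ := hbef
        obtain ⟨u₀, rfl⟩ : ∃ u₀, u = c :: u₀ := by
          cases u with
          | nil =>
            rw [List.nil_append] at heq
            injection heq with h1 _
            exact absurd h1 hca
          | cons u0 u' =>
            injection heq with h1 _
            rw [h1]
            exact ⟨u', rfl⟩
        have hcb : c ≠ b := by
          intro h
          exact hbu (h ▸ List.mem_cons_self)
        have hteq : t = u₀ ++ a :: s := by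
          have := congrArg List.tail heq
          simpa using this
        rw [fo_cons, mf_cons_of_ne _ hca hcb]
        have hbt : b ∈ t := by
          rcases List.mem_cons.mp hb with h | h
          · exact absurd h.symm hcb
          · exact h
        refine ih _ (hlen c) ?_ ?_
        · refine List.mem_filter.mpr ⟨hbt, ?_⟩
          simp only [decide_eq_true_eq]
          exact fun h => hcb h.symm
        · refine ⟨u₀.filter (fun d => decide (d ≠ c)), s.filter (fun d => decide (d ≠ c)),
            ?_, ?_, ?_⟩
          · rw [hteq, List.filter_append, List.filter_cons_of_pos
              (by simp only [decide_eq_true_eq]; exact fun h => hca h.symm)]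
          · intro h
            exact (hau (List.mem_cons_of_mem _ (List.mem_of_mem_filter h)))
          · intro h
            exact (hbu (List.mem_cons_of_mem _ (List.mem_of_mem_filter h)))

lemma mf_fo {a b : V} {l : List V} (hab : a ≠ b) (hb : b ∈ l) (hbef : Before l a b) :
    mf a b (fo l) = [a, b] := mf_fo_aux hab l.length l le_rfl hb hbef

lemma alt_prepend_of_before {w : List V} {a b : V} (hab : a ≠ b) (hb : b ∈ w)
    (hbef : Before w a b) : Alternates (fo w ++ w) a b ↔ Alternates w a b := by
  have hfo := mf_fo hab hb hbef
  obtain ⟨s, hhead⟩ := mf_head_of_before hbef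
  rw [alt_def, alt_def, mf_append, hfo]
  constructor
  · intro h
    exact h.suffix ⟨[a, b], rfl⟩
  · intro h
    apply List.isChain_append.mpr
    refine ⟨List.isChain_cons_cons.mpr ⟨hab, List.isChain_singleton _⟩, h, ?_⟩
    intro c hc d hd
    have hcb : c = b := by
      simp only [List.getLast?_cons_cons, List.getLast?_singleton,
        Option.mem_def, Option.some.injEq] at hc
      exact hc.symm
    have hda : d = a := by
      rw [hhead] at hd
      simp only [List.head?_cons, Option.mem_def, Option.some.injEq] at hd
      exact hd.symm
    rw [hcb, hda]
    exact Ne.symm hab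

lemma alt_prepend {w : List V} {a b : V} (hab : a ≠ b) (ha : a ∈ w) (hb : b ∈ w) :
    Alternates (fo w ++ w) a b ↔ Alternates w a b := by
  rcases before_total hab ha hb with hbef | hbef
  · exact alt_prepend_of_before hab hb hbef
  · exact alt_comm.trans ((alt_prepend_of_before (Ne.symm hab) ha hbef).trans alt_comm.symm)

end Aux

/-- In a word-representable graph, the neighbourhood of every vertex induces a
comparability graph. -/
theorem neighborhood_comparability [Fintype V] [DecidableEq V] (G : SimpleGraph V)
    (h : WordRepresentable G) (v : V) :
    IsComparabilityGraph (G.induce (G.neighborSet v)) := by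
  obtain ⟨w₀, hrep₀⟩ := h
  set w : List V := fo w₀ ++ w₀ with hwdef
  have hrep : Represents G w := by
    constructor
    · intro u
      exact List.mem_append.mpr (Or.inr (hrep₀.1 u))
    · intro a b hab
      exact (alt_prepend hab (hrep₀.1 a) (hrep₀.1 b)).trans (hrep₀.2 a b hab)
  have hv2 : 2 ≤ w.count v := by
    rw [hwdef, List.count_append]
    have h1 : (fo w₀).count v = 1 := List.count_eq_one_of_mem nodup_fo (mem_fo.mpr (hrep₀.1 v))
    have h2 : 0 < w₀.count v := List.count_pos_iff.mpr (hrep₀.1 v)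
    omega
  obtain ⟨g₀, L, hw, hvg₀, hvL, hlen⟩ := exists_decomp v w
  obtain ⟨B, L₁, rfl⟩ : ∃ B L₁, L = B :: L₁ := by
    cases L with
    | nil => simp at hlen; omega
    | cons B L₁ => exact ⟨B, L₁, rfl⟩
  have hL₁ne : L₁ ≠ [] := by
    intro hnil
    rw [hnil] at hlen
    simp at hlen
    omega
  obtain ⟨rs', gt, hcat⟩ := L₁.eq_nil_or_concat.resolve_left hL₁ne
  have hcat' : L₁ = rs' ++ [gt] := by rw [hcat]; exact List.concat_eq_append
  have hvB : v ∉ B := hvL B (List.mem_cons_self)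
  have hvrs : ∀ g ∈ rs', v ∉ g := fun g hg =>
    hvL g (by rw [hcat']; exact List.mem_cons_of_mem _ (List.mem_append_left _ hg))
  have hvgt : v ∉ gt := hvL gt (by rw [hcat']; simp)
  have hw' : w = g₀ ++ vglue v ((B :: rs') ++ [gt]) := by
    rw [hw, hcat']
    rfl
  have hadj_ne : ∀ a : V, G.Adj v a → a ≠ v := by
    intro a ha hh
    rw [hh] at ha
    exact G.loopless.irrefl v ha
  have haltv : ∀ a : V, G.Adj v a → Alternates w a v := fun a ha =>
    (hrep.2 a v (hadj_ne a ha)).mpr ha.symm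
  have hBinf : v :: B ++ [v] <:+: w :=
    inner_infix (L₁ := []) (show w = g₀ ++ vglue v ([] ++ B :: (rs' ++ [gt])) by
      rw [hw, hcat']; rfl) (by simp)
  have hcntB : ∀ a : V, G.Adj v a → B.count a = 1 := fun a ha =>
    count_piece_eq (hadj_ne a ha) (haltv a ha) hBinf hvB
  have hmemB : ∀ a : V, G.Adj v a → a ∈ B := fun a ha =>
    List.count_pos_iff.mp (by rw [hcntB a ha]; omega)
  refine ⟨fun a b => G.Adj a.1 b.1 ∧ B.idxOf a.1 < B.idxOf b.1, ?_, ?_, ?_⟩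
  · rintro a ⟨ha, _⟩
    exact G.loopless.irrefl a.1 ha
  · rintro a b c ⟨hab, iab⟩ ⟨hbc, ibc⟩
    have hac : (a : V) ≠ (c : V) := by
      intro hh
      rw [hh] at iab
      omega
    refine ⟨?_, lt_trans iab ibc⟩
    have hAva : G.Adj v a.1 := a.2
    have hAvb : G.Adj v b.1 := b.2
    have hAvc : G.Adj v c.1 := c.2
    apply (hrep.2 a.1 c.1 hac).mp
    exact main_alt hw' hvg₀ hvB hvrs hvgt (hadj_ne _ hAva) (hadj_ne _ hAvb) (hadj_ne _ hAvc)
      hab.ne hbc.ne hac (haltv _ hAva) (haltv _ hAvb) (haltv _ hAvc)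
      ((hrep.2 _ _ hab.ne).mpr hab) ((hrep.2 _ _ hbc.ne).mpr hbc) iab ibc
  · rintro a b hne
    have hval : (a : V) ≠ (b : V) := fun hh => hne (Subtype.ext hh)
    constructor
    · intro hadj
      have hadj' : G.Adj a.1 b.1 := hadj
      have ia : (a : V) ∈ B := hmemB a.1 a.2
      have ib : (b : V) ∈ B := hmemB b.1 b.2
      rcases Nat.lt_trichotomy (B.idxOf a.1) (B.idxOf b.1) with hlt | heq | hgt
      · exact Or.inl ⟨hadj', hlt⟩
      · exact absurd ((List.idxOf_inj ia).mp heq) hval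
      · exact Or.inr ⟨hadj'.symm, hgt⟩
    · rintro (⟨hh, _⟩ | ⟨hh, _⟩)
      · exact hh
      · exact hh.symm

end WordRepr
end

section
/- Consider the graph G on vertex set {1,…,7} with edge set {{1,2},{1,3},{1,4},{1,5},{1,6},{1,7},{2,3},{2,4},{2,6},{2,7},{3,4},{4,5},{4,7},{5,6},{5,7},{6,7}} (Graph 17′). The orientation of G given by 1→2, 1→3, 1→4, 1→5, 1→6, 1→7, 2→3, 2→4, 2→6, 2→7, 3→4, 5→6, 5→7, 5→4, 7→6, 7→4 is semi-transitive; consequently G is word-representable. -/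
namespace WordRepr

variable {V : Type*}

/-- Graph 17′ on the vertices `{1,…,7}` (vertex `i` is encoded as `i - 1 : Fin 7`). -/
def graph17' : SimpleGraph (Fin 7) :=
  SimpleGraph.fromRel fun x y =>
    ((x : ℕ) + 1, (y : ℕ) + 1) ∈
      [(1, 2), (1, 3), (1, 4), (1, 5), (1, 6), (1, 7), (2, 3), (2, 4), (2, 6), (2, 7),
        (3, 4), (4, 5), (4, 7), (5, 6), (5, 7), (6, 7)]

/-- The orientation `1→2,…,1→7, 2→3, 2→4, 2→6, 2→7, 3→4, 5→6, 5→7, 5→4, 7→6, 7→4`. -/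
def orient17' (x y : Fin 7) : Prop :=
  ((x : ℕ) + 1, (y : ℕ) + 1) ∈
    [(1, 2), (1, 3), (1, 4), (1, 5), (1, 6), (1, 7), (2, 3), (2, 4), (2, 6), (2, 7),
      (3, 4), (5, 6), (5, 7), (5, 4), (7, 6), (7, 4)]

def edges17 : List (ℕ × ℕ) :=
  [(1, 2), (1, 3), (1, 4), (1, 5), (1, 6), (1, 7), (2, 3), (2, 4), (2, 6), (2, 7),
    (3, 4), (4, 5), (4, 7), (5, 6), (5, 7), (6, 7)]

instance (x y : Fin 7) : Decidable (orient17' x y) :=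
  inferInstanceAs (Decidable (_ ∈ _))

instance : DecidableRel graph17'.Adj := fun x y =>
  inferInstanceAs (Decidable (x ≠ y ∧
    (((x : ℕ) + 1, (y : ℕ) + 1) ∈ edges17 ∨ ((y : ℕ) + 1, (x : ℕ) + 1) ∈ edges17)))

lemma orient17'_trans : Transitive orient17' := by unfold Transitive; decide

lemma pairs_of_chain {α : Type*} {o : α → α → Prop} (ht : Transitive o) {k : ℕ}
    {p : Fin (k + 1) → α} (h : ∀ i : Fin k, o (p i.castSucc) (p i.succ)) :
    ∀ i j : Fin (k + 1), i < j → o (p i) (p j) := by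
  have key : ∀ m : ℕ, ∀ hm : m < k + 1, ∀ n, ∀ hn : n < m,
      o (p ⟨n, by omega⟩) (p ⟨m, hm⟩) := by
    intro m
    induction m with
    | zero => intro _ n hn; omega
    | succ m ih =>
      intro hm n hn
      have step : o (p ⟨m, by omega⟩) (p ⟨m + 1, hm⟩) := h ⟨m, by omega⟩
      rcases Nat.lt_succ_iff_lt_or_eq.mp hn with h' | h'
      · exact ht (ih (by omega) n h') step
      · subst h'; exact step
  intro i j hij
  have := key j.val j.isLt i.val hij
  simpa using this

/-- The given orientation of Graph 17′ is semi-transitive; consequently Graph 17′ is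
word-representable. -/
theorem graph17'_semiTransitive_and_wordRepresentable :
    SemiTransitive graph17' orient17' ∧ WordRepresentable graph17' := by
  refine ⟨⟨by unfold IsOrientationOf; decide, ?_, ?_⟩, ?_⟩
  · intro v hv
    rw [@Relation.transGen_eq_self _ orient17' ⟨fun _ _ _ h1 h2 => orient17'_trans h1 h2⟩] at hv
    revert hv; revert v; decide
  · intro k p h _
    exact pairs_of_chain orient17'_trans h
  · refine ⟨[0, 1, 2, 4, 6, 5, 3, 0, 4, 1, 6, 5, 2, 3, 0, 1, 4, 2, 6, 3, 5],
      by decide, fun x y hxy => ?_⟩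
    fin_cases x <;> fin_cases y <;>
      simp_all [Alternates, List.Chain', List.filter, graph17', SimpleGraph.fromRel_adj] <;> first | decide | omega


end WordRepr
end
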